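/- Define q_1, q_2 : (0,1] → ℝ by q_1(x) := max(0, 1 + ln x), and q_2(x) := 0 for x ∈ (0, e^{−3/2}), q_2(x) := 3/2 + ln x for x ∈ [e^{−3/2}, e^{−1}), and q_2(x) := 1 − (ln x)²/2 for x ∈ [e^{−1}, 1]. Then: (i) q_1, q_2 ≥ 0; (ii) q_1(x) + (1/x)·∫_x^1 q_1(y) dy ≥ 1 for all x ∈ (0,1]; (iii) q_2(x) + (1/x)·∫_x^1 [q_2(y) − q_1(y)] dy ≥ 1 for all x ∈ (0,1], with equality for x ∈ [e^{−3/2}, 1]; and (iv) ∫_0^1 q_2(x) dx = e^{−1} + e^{−3/2}. -/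

import Mathlib

open MeasureTheory intervalIntegral

section Aux

lemma hd_xlog {y : ℝ} (hy : 0 < y) :
    HasDerivAt (fun t : ℝ => t * Real.log t) (Real.log y + 1) y := by
  have := (hasDerivAt_id y).mul (Real.hasDerivAt_log hy.ne')
  refine this.congr_deriv ?_
  simp [hy.ne']

lemma hd_xlog2 {y : ℝ} (hy : 0 < y) :
    HasDerivAt (fun t : ℝ => t * (Real.log t) ^ 2) ((Real.log y) ^ 2 + 2 * Real.log y) y := by
  have := (hasDerivAt_id y).mul ((Real.hasDerivAt_log hy.ne').pow 2)
  refine this.congr_deriv ?_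
  field_simp
  simp
  ring

lemma intQ1_high {x : ℝ} (hx : Real.exp (-1) ≤ x) (hx1 : x ≤ 1) :
    ∫ y in x..(1:ℝ), max 0 (1 + Real.log y) = -x * Real.log x := by
  have hx0 : (0:ℝ) < x := lt_of_lt_of_le (Real.exp_pos _) hx
  have huIcc : Set.uIcc x 1 = Set.Icc x 1 := Set.uIcc_of_le hx1
  have hcongr : Set.EqOn (fun y => max 0 (1 + Real.log y)) (fun y => 1 + Real.log y)
      (Set.uIcc x 1) := by
    intro y hy
    rw [huIcc] at hy
    have h1 : Real.exp (-1) ≤ y := le_trans hx hy.1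
    have : (-1:ℝ) ≤ Real.log y := by
      rw [← Real.log_exp (-1)]
      exact Real.log_le_log (Real.exp_pos _) h1
    simp only
    rw [max_eq_right (by linarith)]
  rw [intervalIntegral.integral_congr hcongr]
  have hpos : ∀ y ∈ Set.uIcc x 1, (0:ℝ) < y := by
    intro y hy; rw [huIcc] at hy; linarith [hy.1]
  have hderiv : ∀ y ∈ Set.uIcc x 1,
      HasDerivAt (fun t : ℝ => t * Real.log t) (1 + Real.log y) y := by
    intro y hy
    have := hd_xlog (hpos y hy)
    rwa [add_comm] at this
  have hint : IntervalIntegrable (fun y => 1 + Real.log y) volume x 1 := by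
    apply ContinuousOn.intervalIntegrable
    exact continuousOn_const.add (Real.continuousOn_log.mono (fun y hy => (hpos y hy).ne'))
  rw [intervalIntegral.integral_eq_sub_of_hasDerivAt hderiv hint]
  simp

lemma intQ1_low {x : ℝ} (hx0 : 0 < x) (hx : x ≤ Real.exp (-1)) :
    ∫ y in x..(1:ℝ), max 0 (1 + Real.log y) = Real.exp (-1) := by
  have hb1 : Real.exp (-1:ℝ) < 1 := by
    rw [← Real.exp_zero]; exact Real.exp_lt_exp.2 (by norm_num)
  have hsplit : (∫ y in x..Real.exp (-1:ℝ), max 0 (1 + Real.log y))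
      + ∫ y in Real.exp (-1:ℝ)..(1:ℝ), max 0 (1 + Real.log y)
      = ∫ y in x..(1:ℝ), max 0 (1 + Real.log y) := by
    apply intervalIntegral.integral_add_adjacent_intervals
    · apply ContinuousOn.intervalIntegrable
      apply continuousOn_const.sup
      apply continuousOn_const.add
      apply Real.continuousOn_log.mono
      intro y hy
      rw [Set.uIcc_of_le hx] at hy
      exact (lt_of_lt_of_le hx0 hy.1).ne'
    · apply ContinuousOn.intervalIntegrable
      apply continuousOn_const.sup
      apply continuousOn_const.add
      apply Real.continuousOn_log.mono
      intro y hy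
      rw [Set.uIcc_of_le hb1.le] at hy
      exact (lt_of_lt_of_le (Real.exp_pos _) hy.1).ne'
  rw [← hsplit]
  have h1 : (∫ y in x..Real.exp (-1:ℝ), max 0 (1 + Real.log y)) = 0 := by
    rw [intervalIntegral.integral_congr (g := fun _ => (0:ℝ))]
    · simp
    · intro y hy
      rw [Set.uIcc_of_le hx] at hy
      have : Real.log y ≤ -1 := by
        rw [← Real.log_exp (-1)]
        exact Real.log_le_log (lt_of_lt_of_le hx0 hy.1) hy.2
      simp only
      rw [max_eq_left (by linarith)]
  rw [h1, intQ1_high le_rfl hb1.le, Real.log_exp]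
  ring

end Aux

/-- The optimal dual solution `(q_1, q_2)` of the continuous LP dual `CD(2)` for the
2-choice secretary problem: `q_1(x) = max(0, 1 + ln x)`; `q_2` vanishes on
`(0, e^(-3/2))`, equals `3/2 + ln x` on `[e^(-3/2), e^(-1))` and `1 - (ln x)²/2` on
`[e^(-1), 1]`.  Both are non-negative, feasible for `CD(2)` (with equality in the
second constraint on `[e^(-3/2), 1]`), and `∫_0^1 q_2 = e^(-1) + e^(-3/2)`. -/
theorem optimal_dual_CD2
    (q₁ q₂ : ℝ → ℝ)
    (hq₁ : ∀ x : ℝ, q₁ x = max 0 (1 + Real.log x))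
    (hq₂a : ∀ x ∈ Set.Ioo (0 : ℝ) (Real.exp (-(3 / 2 : ℝ))), q₂ x = 0)
    (hq₂b : ∀ x ∈ Set.Ico (Real.exp (-(3 / 2 : ℝ))) (Real.exp (-1)),
      q₂ x = 3 / 2 + Real.log x)
    (hq₂c : ∀ x ∈ Set.Icc (Real.exp (-1 : ℝ)) 1, q₂ x = 1 - (Real.log x) ^ 2 / 2) :
    (∀ x ∈ Set.Ioc (0 : ℝ) 1, 0 ≤ q₁ x ∧ 0 ≤ q₂ x) ∧
    (∀ x ∈ Set.Ioc (0 : ℝ) 1, 1 ≤ q₁ x + (1 / x) * ∫ y in x..(1 : ℝ), q₁ y) ∧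
    (∀ x ∈ Set.Ioc (0 : ℝ) 1,
      1 ≤ q₂ x + (1 / x) * ∫ y in x..(1 : ℝ), (q₂ y - q₁ y)) ∧
    (∀ x ∈ Set.Icc (Real.exp (-(3 / 2 : ℝ))) 1,
      q₂ x + (1 / x) * (∫ y in x..(1 : ℝ), (q₂ y - q₁ y)) = 1) ∧
    (∫ x in (0 : ℝ)..1, q₂ x) = Real.exp (-1) + Real.exp (-(3 / 2 : ℝ)) := by
  have hq₁' : q₁ = fun x => max 0 (1 + Real.log x) := funext hq₁
  set a : ℝ := Real.exp (-(3/2 : ℝ)) with ha_def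
  set b : ℝ := Real.exp (-1 : ℝ) with hb_def
  have ha0 : 0 < a := Real.exp_pos _
  have hb0 : 0 < b := Real.exp_pos _
  have hab : a < b := Real.exp_lt_exp.2 (by norm_num)
  have hb1 : b < 1 := by rw [hb_def, ← Real.exp_zero]; exact Real.exp_lt_exp.2 (by norm_num)
  have hla : Real.log a = -(3/2 : ℝ) := Real.log_exp _
  have hlb : Real.log b = -1 := Real.log_exp _
  -- refined descriptions of q₂ on closed pieces
  have hA : ∀ x ∈ Set.Ioc (0:ℝ) a, q₂ x = 0 := by
    intro x hx
    rcases eq_or_lt_of_le hx.2 with h | h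
    · rw [h, hq₂b a ⟨le_rfl, hab⟩, hla]; ring
    · exact hq₂a x ⟨hx.1, h⟩
  have hB : ∀ x ∈ Set.Icc a b, q₂ x = 3/2 + Real.log x := by
    intro x hx
    rcases eq_or_lt_of_le hx.2 with h | h
    · rw [h, hq₂c b ⟨le_rfl, hb1.le⟩, hlb]; norm_num
    · exact hq₂b x ⟨hx.1, h⟩
  -- q₁ values
  have hq₁_high : ∀ x, b ≤ x → q₁ x = 1 + Real.log x := by
    intro x hx
    have : (-1:ℝ) ≤ Real.log x := by
      rw [← hlb]; exact Real.log_le_log hb0 hx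
    rw [hq₁ x, max_eq_right (by linarith)]
  have hq₁_low : ∀ x, 0 < x → x ≤ b → q₁ x = 0 := by
    intro x hx0 hx
    have : Real.log x ≤ -1 := by
      rw [← hlb]; exact Real.log_le_log hx0 hx
    rw [hq₁ x, max_eq_left (by linarith)]
  -- integrals of q₁
  have I1_high : ∀ x, b ≤ x → x ≤ 1 → (∫ y in x..(1:ℝ), q₁ y) = -x * Real.log x := by
    intro x h1 h2; rw [hq₁']; exact intQ1_high h1 h2
  have I1_low : ∀ x, 0 < x → x ≤ b → (∫ y in x..(1:ℝ), q₁ y) = b := by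
    intro x h1 h2; rw [hq₁']; exact intQ1_low h1 h2
  -- integral of q₂ - q₁ on [b, 1]
  have J3 : ∀ x ∈ Set.Icc b 1, (∫ y in x..(1:ℝ), (q₂ y - q₁ y)) = x * (Real.log x)^2 / 2 := by
    intro x hx
    have hx0 : 0 < x := lt_of_lt_of_le hb0 hx.1
    have huIcc : Set.uIcc x 1 = Set.Icc x 1 := Set.uIcc_of_le hx.2
    have hpos : ∀ y ∈ Set.uIcc x 1, (0:ℝ) < y := by
      intro y hy; rw [huIcc] at hy; linarith [hy.1]
    rw [intervalIntegral.integral_congr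
        (g := fun y => -Real.log y - (Real.log y)^2 / 2) ?_]
    · have hderiv : ∀ y ∈ Set.uIcc x 1,
          HasDerivAt (fun t : ℝ => -(t * (Real.log t)^2 / 2))
            (-Real.log y - (Real.log y)^2 / 2) y := by
        intro y hy
        have h := ((hd_xlog2 (hpos y hy)).div_const 2).neg
        refine h.congr_deriv ?_
        ring
      have hint : IntervalIntegrable (fun y => -Real.log y - (Real.log y)^2/2) volume x 1 := by
        apply ContinuousOn.intervalIntegrable
        have hl : ContinuousOn Real.log (Set.uIcc x 1) :=
          Real.continuousOn_log.mono (fun y hy => (hpos y hy).ne')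
        exact hl.neg.sub ((hl.pow 2).div_const 2)
      rw [intervalIntegral.integral_eq_sub_of_hasDerivAt hderiv hint]
      simp
    · intro y hy
      rw [huIcc] at hy
      have hyb : b ≤ y := le_trans hx.1 hy.1
      show q₂ y - q₁ y = _
      rw [hq₂c y ⟨hyb, hy.2⟩, hq₁_high y hyb]
      ring
  -- integral of q₂ - q₁ on [a, b]
  have J2 : ∀ x ∈ Set.Icc a b, (∫ y in x..(1:ℝ), (q₂ y - q₁ y))
      = -x * (1/2 + Real.log x) := by
    intro x hx
    have hx0 : 0 < x := lt_of_lt_of_le ha0 hx.1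
    have hint1 : IntervalIntegrable (fun y => q₂ y - q₁ y) volume x b := by
      rw [intervalIntegrable_iff_integrableOn_Ioc_of_le hx.2]
      have hpos : ∀ y ∈ Set.Icc x b, (0:ℝ) < y := fun y hy => lt_of_lt_of_le hx0 hy.1
      have hg : IntegrableOn (fun y => (3/2 : ℝ) + Real.log y) (Set.Ioc x b) := by
        have hcont : ContinuousOn (fun y => (3/2 : ℝ) + Real.log y) (Set.Icc x b) :=
          continuousOn_const.add
            (Real.continuousOn_log.mono (fun y hy => (hpos y hy).ne'))
        exact hcont.integrableOn_Icc.mono_set Set.Ioc_subset_Icc_self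
      exact hg.congr_fun (fun y hy => by
        show (3/2 : ℝ) + Real.log y = q₂ y - q₁ y
        rw [hB y ⟨le_trans hx.1 hy.1.le, hy.2⟩,
          hq₁_low y (lt_of_lt_of_le hx0 hy.1.le) hy.2]
        ring) measurableSet_Ioc
    have hint2 : IntervalIntegrable (fun y => q₂ y - q₁ y) volume b 1 := by
      rw [intervalIntegrable_iff_integrableOn_Ioc_of_le hb1.le]
      have hg : IntegrableOn (fun y => -Real.log y - (Real.log y)^2/2) (Set.Ioc b 1) := by
        have hl : ContinuousOn Real.log (Set.Icc b 1) :=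
          Real.continuousOn_log.mono (fun y hy => (lt_of_lt_of_le hb0 hy.1).ne')
        exact (hl.neg.sub ((hl.pow 2).div_const 2)).integrableOn_Icc.mono_set
          Set.Ioc_subset_Icc_self
      exact hg.congr_fun (fun y hy => by
        show -Real.log y - (Real.log y)^2/2 = q₂ y - q₁ y
        rw [hq₂c y ⟨hy.1.le, hy.2⟩, hq₁_high y hy.1.le]
        ring) measurableSet_Ioc
    rw [← intervalIntegral.integral_add_adjacent_intervals hint1 hint2]
    rw [J3 b ⟨le_rfl, hb1.le⟩, hlb]
    have hmid : (∫ y in x..b, (q₂ y - q₁ y)) = -b/2 - b - (x/2 + x * Real.log x) + b := by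
      rw [intervalIntegral.integral_congr (g := fun y => (3/2 : ℝ) + Real.log y) ?_]
      · have hpos : ∀ y ∈ Set.uIcc x b, (0:ℝ) < y := by
          intro y hy
          rw [Set.uIcc_of_le hx.2] at hy
          exact lt_of_lt_of_le hx0 hy.1
        have hderiv : ∀ y ∈ Set.uIcc x b,
            HasDerivAt (fun t : ℝ => t/2 + t * Real.log t) ((3:ℝ)/2 + Real.log y) y := by
          intro y hy
          have h := ((hasDerivAt_id y).div_const 2).add (hd_xlog (hpos y hy))
          refine h.congr_deriv ?_
          ring
        have hint : IntervalIntegrable (fun y => (3/2:ℝ) + Real.log y) volume x b := by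
          apply ContinuousOn.intervalIntegrable
          exact continuousOn_const.add
            (Real.continuousOn_log.mono (fun y hy => (hpos y hy).ne'))
        rw [intervalIntegral.integral_eq_sub_of_hasDerivAt hderiv hint, hlb]
        ring
      · intro y hy
        rw [Set.uIcc_of_le hx.2] at hy
        show q₂ y - q₁ y = _
        rw [hB y ⟨le_trans hx.1 hy.1, hy.2⟩,
          hq₁_low y (lt_of_lt_of_le hx0 hy.1) hy.2]
        ring
    rw [hmid]
    ring
  -- integral of q₂ - q₁ on (0, a]
  have J1 : ∀ x ∈ Set.Ioc (0:ℝ) a, (∫ y in x..(1:ℝ), (q₂ y - q₁ y)) = a := by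
    intro x hx
    have hint1 : IntervalIntegrable (fun y => q₂ y - q₁ y) volume x a := by
      rw [intervalIntegrable_iff_integrableOn_Ioc_of_le hx.2]
      exact (integrableOn_const (C := (0:ℝ)) measure_Ioc_lt_top.ne).congr_fun
        (fun y hy => by
          show (0:ℝ) = q₂ y - q₁ y
          rw [hA y ⟨lt_trans hx.1 hy.1, hy.2⟩,
            hq₁_low y (lt_trans hx.1 hy.1) (le_trans hy.2 hab.le)]
          norm_num) measurableSet_Ioc
    have hint2 : IntervalIntegrable (fun y => q₂ y - q₁ y) volume a 1 := by
      have h1 : IntervalIntegrable (fun y => q₂ y - q₁ y) volume a b := by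
        rw [intervalIntegrable_iff_integrableOn_Ioc_of_le hab.le]
        have hg : IntegrableOn (fun y => (3/2 : ℝ) + Real.log y) (Set.Ioc a b) := by
          have hcont : ContinuousOn (fun y => (3/2 : ℝ) + Real.log y) (Set.Icc a b) :=
            continuousOn_const.add
              (Real.continuousOn_log.mono (fun y hy => (lt_of_lt_of_le ha0 hy.1).ne'))
          exact hcont.integrableOn_Icc.mono_set Set.Ioc_subset_Icc_self
        exact hg.congr_fun (fun y hy => by
          show (3/2 : ℝ) + Real.log y = q₂ y - q₁ y
          rw [hB y ⟨hy.1.le, hy.2⟩, hq₁_low y (lt_trans ha0 hy.1) hy.2]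
          ring) measurableSet_Ioc
      have h2 : IntervalIntegrable (fun y => q₂ y - q₁ y) volume b 1 := by
        rw [intervalIntegrable_iff_integrableOn_Ioc_of_le hb1.le]
        have hg : IntegrableOn (fun y => -Real.log y - (Real.log y)^2/2) (Set.Ioc b 1) := by
          have hl : ContinuousOn Real.log (Set.Icc b 1) :=
            Real.continuousOn_log.mono (fun y hy => (lt_of_lt_of_le hb0 hy.1).ne')
          exact (hl.neg.sub ((hl.pow 2).div_const 2)).integrableOn_Icc.mono_set
            Set.Ioc_subset_Icc_self
        exact hg.congr_fun (fun y hy => by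
          show -Real.log y - (Real.log y)^2/2 = q₂ y - q₁ y
          rw [hq₂c y ⟨hy.1.le, hy.2⟩, hq₁_high y hy.1.le]
          ring) measurableSet_Ioc
      exact h1.trans h2
    rw [← intervalIntegral.integral_add_adjacent_intervals hint1 hint2]
    rw [J2 a ⟨le_rfl, hab.le⟩, hla]
    have hzero : (∫ y in x..a, (q₂ y - q₁ y)) = 0 := by
      rw [intervalIntegral.integral_of_le hx.2,
        MeasureTheory.setIntegral_congr_fun measurableSet_Ioc
          (g := fun _ => (0:ℝ)) (fun y hy => by
            show q₂ y - q₁ y = 0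
            rw [hA y ⟨lt_trans hx.1 hy.1, hy.2⟩,
              hq₁_low y (lt_trans hx.1 hy.1) (le_trans hy.2 hab.le)]
            norm_num)]
      simp
    rw [hzero]
    ring
  refine ⟨?_, ?_, ?_, ?_, ?_⟩
  -- nonnegativity
  · intro x hx
    refine ⟨by rw [hq₁ x]; exact le_max_left _ _, ?_⟩
    rcases le_or_gt x a with h | h
    · rw [hA x ⟨hx.1, h⟩]
    rcases le_or_gt x b with h2 | h2
    · rw [hB x ⟨h.le, h2⟩]
      have : Real.log a ≤ Real.log x := Real.log_le_log ha0 h.le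
      rw [hla] at this
      linarith
    · rw [hq₂c x ⟨h2.le, hx.2⟩]
      have h3 : Real.log b ≤ Real.log x := Real.log_le_log hb0 h2.le
      have h4 : Real.log x ≤ Real.log 1 := Real.log_le_log hx.1 hx.2
      rw [hlb] at h3; rw [Real.log_one] at h4
      nlinarith
  -- first constraint
  · intro x hx
    have hx0 : x ≠ 0 := hx.1.ne'
    rcases le_or_gt b x with h | h
    · have heq : q₁ x + (1/x) * (∫ y in x..(1:ℝ), q₁ y) = 1 := by
        rw [hq₁_high x h, I1_high x h hx.2]
        field_simp
        ring
      exact heq.ge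
    · rw [hq₁_low x hx.1 h.le, I1_low x hx.1 h.le, zero_add]
      rw [div_mul_eq_mul_div, one_mul, le_div_iff₀ hx.1]
      linarith
  -- second constraint
  · intro x hx
    rcases le_or_gt x a with h | h
    · rw [hA x ⟨hx.1, h⟩, J1 x ⟨hx.1, h⟩, zero_add]
      rw [div_mul_eq_mul_div, one_mul, le_div_iff₀ hx.1]
      linarith
    rcases le_or_gt x b with h2 | h2
    · have hx0 : x ≠ 0 := hx.1.ne'
      have heq : q₂ x + (1/x) * (∫ y in x..(1:ℝ), (q₂ y - q₁ y)) = 1 := by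
        rw [hB x ⟨h.le, h2⟩, J2 x ⟨h.le, h2⟩]
        field_simp
        try ring
      exact heq.ge
    · have hx0 : x ≠ 0 := hx.1.ne'
      have heq : q₂ x + (1/x) * (∫ y in x..(1:ℝ), (q₂ y - q₁ y)) = 1 := by
        rw [hq₂c x ⟨h2.le, hx.2⟩, J3 x ⟨h2.le, hx.2⟩]
        field_simp
        try ring
      exact heq.ge
  -- equality on [a, 1]
  · intro x hx
    have hx0 : x ≠ 0 := (lt_of_lt_of_le ha0 hx.1).ne'
    rcases le_or_gt x b with h2 | h2
    · rw [hB x ⟨hx.1, h2⟩, J2 x ⟨hx.1, h2⟩]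
      field_simp
      try ring
    · rw [hq₂c x ⟨h2.le, hx.2⟩, J3 x ⟨h2.le, hx.2⟩]
      field_simp
      try ring
  -- value of ∫ q₂
  · have hint0 : IntervalIntegrable q₂ volume 0 a := by
      rw [intervalIntegrable_iff_integrableOn_Ioc_of_le ha0.le]
      exact (integrableOn_const measure_Ioc_lt_top.ne).congr_fun
        (fun y hy => (hA y hy).symm) measurableSet_Ioc
    have hintab : IntervalIntegrable q₂ volume a b := by
      rw [intervalIntegrable_iff_integrableOn_Ioc_of_le hab.le]
      have hcont : ContinuousOn (fun y => (3/2 : ℝ) + Real.log y) (Set.Icc a b) :=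
        continuousOn_const.add
          (Real.continuousOn_log.mono (fun y hy => (lt_of_lt_of_le ha0 hy.1).ne'))
      exact (hcont.integrableOn_Icc.mono_set Set.Ioc_subset_Icc_self).congr_fun
        (fun y hy => (hB y ⟨hy.1.le, hy.2⟩).symm) measurableSet_Ioc
    have hintb1 : IntervalIntegrable q₂ volume b 1 := by
      rw [intervalIntegrable_iff_integrableOn_Ioc_of_le hb1.le]
      have hl : ContinuousOn Real.log (Set.Icc b 1) :=
        Real.continuousOn_log.mono (fun y hy => (lt_of_lt_of_le hb0 hy.1).ne')
      have hcont : ContinuousOn (fun y => 1 - (Real.log y)^2/2) (Set.Icc b 1) :=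
        continuousOn_const.sub ((hl.pow 2).div_const 2)
      exact (hcont.integrableOn_Icc.mono_set Set.Ioc_subset_Icc_self).congr_fun
        (fun y hy => (hq₂c y ⟨hy.1.le, hy.2⟩).symm) measurableSet_Ioc
    rw [← intervalIntegral.integral_add_adjacent_intervals
        (hint0.trans hintab) hintb1,
      ← intervalIntegral.integral_add_adjacent_intervals hint0 hintab]
    have h0 : (∫ x in (0:ℝ)..a, q₂ x) = 0 := by
      rw [intervalIntegral.integral_of_le ha0.le,
        MeasureTheory.setIntegral_congr_fun measurableSet_Ioc
          (g := fun _ => (0:ℝ)) (fun y hy => hA y hy)]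
      simp
    have h1 : (∫ x in a..b, q₂ x) = a - b/2 := by
      rw [intervalIntegral.integral_congr (g := fun y => (3/2:ℝ) + Real.log y)
        (fun y hy => by
          rw [Set.uIcc_of_le hab.le] at hy
          exact hB y hy)]
      have hpos : ∀ y ∈ Set.uIcc a b, (0:ℝ) < y := by
        intro y hy
        rw [Set.uIcc_of_le hab.le] at hy
        exact lt_of_lt_of_le ha0 hy.1
      have hderiv : ∀ y ∈ Set.uIcc a b,
          HasDerivAt (fun t : ℝ => t/2 + t * Real.log t) ((3:ℝ)/2 + Real.log y) y := by
        intro y hy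
        have h := ((hasDerivAt_id y).div_const 2).add (hd_xlog (hpos y hy))
        refine h.congr_deriv ?_
        ring
      have hint : IntervalIntegrable (fun y => (3/2:ℝ) + Real.log y) volume a b := by
        apply ContinuousOn.intervalIntegrable
        exact continuousOn_const.add
          (Real.continuousOn_log.mono (fun y hy => (hpos y hy).ne'))
      rw [intervalIntegral.integral_eq_sub_of_hasDerivAt hderiv hint, hla, hlb]
      ring
    have h2 : (∫ x in b..(1:ℝ), q₂ x) = 3 * b / 2 := by
      rw [intervalIntegral.integral_congr (g := fun y => 1 - (Real.log y)^2/2)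
        (fun y hy => by
          rw [Set.uIcc_of_le hb1.le] at hy
          exact hq₂c y hy)]
      have hpos : ∀ y ∈ Set.uIcc b 1, (0:ℝ) < y := by
        intro y hy
        rw [Set.uIcc_of_le hb1.le] at hy
        exact lt_of_lt_of_le hb0 hy.1
      have hderiv : ∀ y ∈ Set.uIcc b 1,
          HasDerivAt (fun t : ℝ => t * Real.log t - t * (Real.log t)^2 / 2)
            (1 - (Real.log y)^2/2) y := by
        intro y hy
        have h := (hd_xlog (hpos y hy)).sub ((hd_xlog2 (hpos y hy)).div_const 2)
        refine h.congr_deriv ?_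
        ring
      have hint : IntervalIntegrable (fun y => 1 - (Real.log y)^2/2) volume b 1 := by
        apply ContinuousOn.intervalIntegrable
        have hl : ContinuousOn Real.log (Set.uIcc b 1) :=
          Real.continuousOn_log.mono (fun y hy => (hpos y hy).ne')
        exact continuousOn_const.sub ((hl.pow 2).div_const 2)
      rw [intervalIntegral.integral_eq_sub_of_hasDerivAt hderiv hint, hlb]
      norm_num
      ring
    rw [h0, h1, h2]
    ring
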